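/- For any real n×n matrix A, the infimum of ‖A − X‖_F² over all stable real n×n matrices X equals the infimum of ‖A − (J − R)Q‖_F² over all real n×n matrices J, R, Q with Jᵀ = −J, R positive semidefinite, and Q positive semidefinite. -/

import Mathlib

open Matrix
/-- The complexification of a real matrix. -/
noncomputable def toC {n : ℕ} (A : Matrix (Fin n) (Fin n) ℝ) : Matrix (Fin n) (Fin n) ℂ :=
  A.map (fun a => (a : ℂ))

lemma toC_eq {n : ℕ} (A : Matrix (Fin n) (Fin n) ℝ) : toC A = A.map Complex.ofRealHom := rfl

lemma toC_mul {n : ℕ} (A B : Matrix (Fin n) (Fin n) ℝ) : toC (A * B) = toC A * toC B := by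
  simp [toC_eq, Matrix.map_mul]

lemma toC_one {n : ℕ} : toC (1 : Matrix (Fin n) (Fin n) ℝ) = 1 := by
  simp [toC_eq, Matrix.map_one]

lemma toC_add {n : ℕ} (A B : Matrix (Fin n) (Fin n) ℝ) : toC (A + B) = toC A + toC B := by
  simp [toC_eq, Matrix.map_add]

lemma toC_sub {n : ℕ} (A B : Matrix (Fin n) (Fin n) ℝ) : toC (A - B) = toC A - toC B := by
  simp [toC_eq, Matrix.map_sub]

lemma toC_smul {n : ℕ} (c : ℝ) (A : Matrix (Fin n) (Fin n) ℝ) :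
    toC (c • A) = (c : ℂ) • toC A := by
  ext i j; simp [toC]

lemma toC_transpose {n : ℕ} (A : Matrix (Fin n) (Fin n) ℝ) : toC Aᵀ = (toC A)ᵀ := by
  ext i j; simp [toC]

lemma quad_re {n : ℕ} (S : Matrix (Fin n) (Fin n) ℝ) (z : Fin n → ℂ) :
    (star z ⬝ᵥ (toC S *ᵥ z)).re =
      (fun i => (z i).re) ⬝ᵥ (S *ᵥ fun i => (z i).re) +
      (fun i => (z i).im) ⬝ᵥ (S *ᵥ fun i => (z i).im) := by
  simp only [dotProduct, mulVec, toC, Matrix.map_apply, Pi.star_apply, Complex.re_sum,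
    Finset.mul_sum, Finset.sum_mul]
  rw [← Finset.sum_add_distrib]
  refine Finset.sum_congr rfl fun i _ => ?_
  rw [← Finset.sum_add_distrib]
  refine Finset.sum_congr rfl fun j _ => ?_
  simp only [RCLike.star_def, Complex.mul_re, Complex.mul_im, Complex.conj_re, Complex.conj_im,
    Complex.ofReal_re, Complex.ofReal_im]
  ring

lemma quad_im_symm {n : ℕ} (S : Matrix (Fin n) (Fin n) ℝ) (hS : Sᵀ = S) (z : Fin n → ℂ) :
    (star z ⬝ᵥ (toC S *ᵥ z)).im = 0 := by
  have key : ∀ v w : Fin n → ℝ, v ⬝ᵥ (S *ᵥ w) = w ⬝ᵥ (S *ᵥ v) := by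
    intro v w
    rw [Matrix.dotProduct_mulVec, ← Matrix.mulVec_transpose, hS, dotProduct_comm]
  simp only [dotProduct, mulVec, toC, Matrix.map_apply, Pi.star_apply, Complex.im_sum,
    Finset.mul_sum]
  have : ∀ i j, ((starRingEnd ℂ) (z i) * ((S i j : ℂ) * z j)).im
      = S i j * ((z i).re * (z j).im - (z i).im * (z j).re) := by
    intro i j; simp [Complex.mul_im, Complex.mul_re]; ring
  calc (∑ i, ∑ j, ((starRingEnd ℂ) (z i) * ((S i j : ℂ) * z j)).im)
      = ∑ i, ∑ j, S i j * ((z i).re * (z j).im - (z i).im * (z j).re) := by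
        exact Finset.sum_congr rfl fun i _ => Finset.sum_congr rfl fun j _ => this i j
    _ = (fun i => (z i).re) ⬝ᵥ (S *ᵥ fun i => (z i).im) - (fun i => (z i).im) ⬝ᵥ (S *ᵥ fun i => (z i).re) := by
        simp only [dotProduct, mulVec, Finset.mul_sum, ← Finset.sum_sub_distrib]
        refine Finset.sum_congr rfl fun i _ => Finset.sum_congr rfl fun j _ => by ring
    _ = 0 := by rw [key]; ring


/-- A real matrix is stable if every complex eigenvalue has nonpositive real part and
every purely imaginary eigenvalue is semisimple (generalized eigenspace = eigenspace). -/
def IsStable {n : ℕ} (A : Matrix (Fin n) (Fin n) ℝ) : Prop :=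
  ∀ μ : ℂ, (∃ x : Fin n → ℂ, x ≠ 0 ∧ toC A *ᵥ x = μ • x) →
    μ.re ≤ 0 ∧ (μ.re = 0 →
      ∀ x : Fin n → ℂ, ((toC A - μ • 1) ^ n) *ᵥ x = 0 ↔ (toC A - μ • 1) *ᵥ x = 0)

lemma star_mulVec_toC {n : ℕ} (Q : Matrix (Fin n) (Fin n) ℝ) (z : Fin n → ℂ) :
    star (toC Q *ᵥ z) = toC Q *ᵥ star z := by
  ext i
  simp only [Pi.star_apply, mulVec, dotProduct, toC, Matrix.map_apply, star_sum, star_mul',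
    RCLike.star_def, Complex.conj_ofReal]

lemma herm_move {n : ℕ} (Q : Matrix (Fin n) (Fin n) ℝ) (hQ : Qᵀ = Q) (z w : Fin n → ℂ) :
    star z ⬝ᵥ (toC Q *ᵥ w) = star (toC Q *ᵥ z) ⬝ᵥ w := by
  rw [star_mulVec_toC, Matrix.dotProduct_mulVec, ← Matrix.mulVec_transpose, ← toC_transpose, hQ]

lemma quad_skew {n : ℕ} (J : Matrix (Fin n) (Fin n) ℝ) (hJ : Jᵀ = -J) (v : Fin n → ℝ) :
    v ⬝ᵥ (J *ᵥ v) = 0 := by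
  have h : v ⬝ᵥ (J *ᵥ v) = -(v ⬝ᵥ (J *ᵥ v)) := by
    conv_lhs => rw [Matrix.dotProduct_mulVec, ← Matrix.mulVec_transpose, hJ]
    rw [Matrix.neg_mulVec, neg_dotProduct, dotProduct_comm]
  linarith

lemma quad_re_skew {n : ℕ} (J : Matrix (Fin n) (Fin n) ℝ) (hJ : Jᵀ = -J) (z : Fin n → ℂ) :
    (star z ⬝ᵥ (toC J *ᵥ z)).re = 0 := by
  rw [quad_re]
  rw [quad_skew J hJ, quad_skew J hJ]; norm_num

lemma quad_re_psd {n : ℕ} (R : Matrix (Fin n) (Fin n) ℝ) (hR : R.PosSemidef) (z : Fin n → ℂ) :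
    0 ≤ (star z ⬝ᵥ (toC R *ᵥ z)).re := by
  rw [quad_re]
  have h1 := hR.dotProduct_mulVec_nonneg (fun i => (z i).re)
  have h2 := hR.dotProduct_mulVec_nonneg (fun i => (z i).im)
  simp only [star_trivial] at h1 h2
  linarith

lemma quad_re_pd {n : ℕ} (Q : Matrix (Fin n) (Fin n) ℝ) (hQ : Q.PosDef) (z : Fin n → ℂ)
    (hz : z ≠ 0) : 0 < (star z ⬝ᵥ (toC Q *ᵥ z)).re := by
  rw [quad_re]
  have hcase : (fun i => (z i).re) ≠ 0 ∨ (fun i => (z i).im) ≠ 0 := by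
    by_contra h
    push_neg at h
    apply hz
    funext i
    have h1 := congrFun h.1 i
    have h2 := congrFun h.2 i
    simp only [Pi.zero_apply] at h1 h2
    exact Complex.ext h1 h2
  rcases hcase with h | h
  · have h1 := hQ.dotProduct_mulVec_pos h
    have h2 := hQ.posSemidef.dotProduct_mulVec_nonneg (fun i => (z i).im)
    simp only [star_trivial] at h1 h2
    linarith
  · have h1 := hQ.dotProduct_mulVec_pos h
    have h2 := hQ.posSemidef.dotProduct_mulVec_nonneg (fun i => (z i).re)
    simp only [star_trivial] at h1 h2
    linarith

lemma quad_im_eq_zero {n : ℕ} (Q : Matrix (Fin n) (Fin n) ℝ) (hQ : Qᵀ = Q) (z : Fin n → ℂ) :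
    (star z ⬝ᵥ (toC Q *ᵥ z)).im = 0 := quad_im_symm Q hQ z

/-- Dissipativity of (J-R)Q with respect to the Q-inner product. -/
lemma dissip {n : ℕ} (J R Q : Matrix (Fin n) (Fin n) ℝ) (hJ : Jᵀ = -J) (hR : R.PosSemidef)
    (hQ : Qᵀ = Q) (z : Fin n → ℂ) :
    (star z ⬝ᵥ (toC Q *ᵥ (toC ((J - R) * Q) *ᵥ z))).re ≤ 0 := by
  have hy : toC ((J - R) * Q) *ᵥ z = toC (J - R) *ᵥ (toC Q *ᵥ z) := by
    rw [toC_mul, ← Matrix.mulVec_mulVec]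
  set y := toC Q *ᵥ z with hy'
  rw [hy, herm_move Q hQ z (toC (J - R) *ᵥ y), ← hy']
  have : toC (J - R) = toC J - toC R := toC_sub J R
  rw [this, Matrix.sub_mulVec, dotProduct_sub]
  have h1 := quad_re_skew J hJ y
  have h2 := quad_re_psd R hR y
  simp only [Complex.sub_re]
  linarith

/-- Positive definiteness gives stability of (J-R)Q. -/
lemma stable_of_DH_pd {n : ℕ} (J R Q : Matrix (Fin n) (Fin n) ℝ) (hJ : Jᵀ = -J)
    (hR : R.PosSemidef) (hQ : Q.PosDef) : IsStable ((J - R) * Q) := by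
  have hQsym : Qᵀ = Q := hQ.1
  intro μ ⟨x, hx0, hx⟩
  set M := (J - R) * Q with hM
  -- the Q-inner product of x with itself
  have hcre : 0 < (star x ⬝ᵥ (toC Q *ᵥ x)).re := quad_re_pd Q hQ x hx0
  have hcim : (star x ⬝ᵥ (toC Q *ᵥ x)).im = 0 := quad_im_eq_zero Q hQsym x
  have key : (star x ⬝ᵥ (toC Q *ᵥ (toC M *ᵥ x))).re = μ.re * (star x ⬝ᵥ (toC Q *ᵥ x)).re := by
    rw [hx]
    rw [Matrix.mulVec_smul, dotProduct_smul]
    simp only [Complex.mul_re, smul_eq_mul]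
    rw [hcim]; ring
  have hd := dissip J R Q hJ hR hQsym x
  rw [key] at hd
  have hμre : μ.re ≤ 0 := by
    by_contra h
    push_neg at h
    nlinarith
  refine ⟨hμre, fun hμ0 => ?_⟩
  -- semisimplicity
  set N := toC M - μ • (1 : Matrix (Fin n) (Fin n) ℂ) with hN
  -- key: ker N^2 ⊆ ker N
  have ker2 : ∀ w : Fin n → ℂ, N *ᵥ (N *ᵥ w) = 0 → N *ᵥ w = 0 := by
    intro w hw
    set v := N *ᵥ w with hv
    by_contra hvne
    have hvQ : 0 < (star v ⬝ᵥ (toC Q *ᵥ v)).re := quad_re_pd Q hQ v hvne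
    -- for every real t, Re⟨(w + t v), Q v⟩ ≤ 0
    have main : ∀ t : ℝ, (star w ⬝ᵥ (toC Q *ᵥ v)).re + t * (star v ⬝ᵥ (toC Q *ᵥ v)).re ≤ 0 := by
      intro t
      set z := w + (t : ℂ) • v with hz
      have hNz : N *ᵥ z = v := by
        rw [hz, Matrix.mulVec_add, Matrix.mulVec_smul, ← hv, hw, smul_zero, add_zero]
      have hMz : toC M *ᵥ z = v + μ • z := by
        have : toC M *ᵥ z = (N + μ • 1) *ᵥ z := by rw [hN, sub_add_cancel]
        rw [this, Matrix.add_mulVec, hNz, Matrix.smul_mulVec, Matrix.one_mulVec]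
      have hdz := dissip J R Q hJ hR hQsym z
      rw [← hM] at hdz
      rw [hMz] at hdz
      rw [Matrix.mulVec_add, dotProduct_add, Matrix.mulVec_smul, dotProduct_smul] at hdz
      have him : (star z ⬝ᵥ (toC Q *ᵥ z)).im = 0 := quad_im_eq_zero Q hQsym z
      have : (μ • (star z ⬝ᵥ (toC Q *ᵥ z))).re = 0 := by
        simp only [smul_eq_mul, Complex.mul_re, him, hμ0]; ring
      rw [Complex.add_re, this, add_zero] at hdz
      -- expand star z
      have hsz : star z = star w + (t : ℂ) • star v := by
        rw [hz]; ext i; simp [mul_comm]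
      rw [hsz, add_dotProduct, smul_dotProduct] at hdz
      simp only [Complex.add_re, smul_eq_mul, Complex.mul_re, Complex.ofReal_re,
        Complex.ofReal_im] at hdz
      linarith [hdz]
    -- contradiction: take t large
    set a := (star w ⬝ᵥ (toC Q *ᵥ v)).re
    set c := (star v ⬝ᵥ (toC Q *ᵥ v)).re
    have h1 := main ((1 + |a|) / c)
    have h2 : (1 + |a|) / c * c = 1 + |a| := div_mul_cancel₀ _ (ne_of_gt hvQ)
    have h3 := abs_nonneg a
    have h4 := neg_abs_le a
    nlinarith
  -- now conclude for the n-th power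
  intro x'
  constructor
  · intro hx'
    -- ker N^n ⊆ ker N
    rcases Nat.eq_zero_or_pos n with hn | hn
    · subst hn
      funext i; exact absurd i.2 (by omega)
    · -- N^(k+1) x = 0 → N x = 0 by induction on k
      have step : ∀ k, ∀ w : Fin n → ℂ, (N ^ (k + 1)) *ᵥ w = 0 → N *ᵥ w = 0 := by
        intro k
        induction k with
        | zero => intro w hw; rwa [pow_one] at hw
        | succ k ih =>
          intro w hw
          have h1 : (N ^ (k + 1)) *ᵥ (N *ᵥ w) = 0 := by
            rw [Matrix.mulVec_mulVec, ← pow_succ]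
            exact hw
          have h2 := ih _ h1
          exact ker2 w h2
      obtain ⟨m, rfl⟩ : ∃ m, n = m + 1 := ⟨n - 1, by omega⟩
      exact step m x' hx'
  · intro hx'
    rcases Nat.eq_zero_or_pos n with hn | hn
    · subst hn
      funext i; exact absurd i.2 (by omega)
    · obtain ⟨m, rfl⟩ : ∃ m, n = m + 1 := ⟨n - 1, by omega⟩
      rw [pow_succ, ← Matrix.mulVec_mulVec, hx', Matrix.mulVec_zero]


attribute [local instance] Matrix.frobeniusSeminormedAddCommGroup Matrix.frobeniusNormedAddCommGroup
  Matrix.frobeniusNormedRing Matrix.frobeniusNormedAlgebra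

variable {n : ℕ}

lemma mem_spectrum_iff_eigen (M : Matrix (Fin n) (Fin n) ℂ) (μ : ℂ) :
    μ ∈ spectrum ℂ M ↔ ∃ x : Fin n → ℂ, x ≠ 0 ∧ M *ᵥ x = μ • x := by
  rw [spectrum.mem_iff]
  have halg : (algebraMap ℂ (Matrix (Fin n) (Fin n) ℂ)) μ = μ • 1 := by
    rw [Algebra.algebraMap_eq_smul_one]
  rw [halg, Matrix.isUnit_iff_isUnit_det, isUnit_iff_ne_zero, not_not,
    ← Matrix.exists_mulVec_eq_zero_iff]
  constructor
  · rintro ⟨v, hv, hv2⟩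
    refine ⟨v, hv, ?_⟩
    have := hv2
    rw [Matrix.sub_mulVec, Matrix.smul_mulVec, Matrix.one_mulVec, sub_eq_zero] at this
    exact this.symm
  · rintro ⟨v, hv, hv2⟩
    refine ⟨v, hv, ?_⟩
    rw [Matrix.sub_mulVec, Matrix.smul_mulVec, Matrix.one_mulVec, sub_eq_zero, hv2]

lemma pow_norm_bound (hn : 0 < n) (M : Matrix (Fin n) (Fin n) ℂ)
    (h : ∀ μ : ℂ, (∃ x : Fin n → ℂ, x ≠ 0 ∧ M *ᵥ x = μ • x) → ‖μ‖ < 1) :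
    ∃ r : ℝ, 0 ≤ r ∧ r < 1 ∧ ∃ N : ℕ, ∀ k ≥ N, ‖M ^ k‖ ≤ r ^ k := by
  have : Nontrivial (Matrix (Fin n) (Fin n) ℂ) := by
    refine ⟨0, 1, fun hc => ?_⟩
    have := congrFun (congrFun hc ⟨0, hn⟩) ⟨0, hn⟩
    simp [Matrix.one_apply] at this
  have hρ : spectralRadius ℂ M < 1 := by
    have := spectrum.spectralRadius_lt_of_forall_lt M
      (r := 1) (fun z hz => ?_)
    · simpa using this
    · have := h z ((mem_spectrum_iff_eigen M z).1 hz)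
      simpa [← NNReal.coe_lt_coe] using this
  obtain ⟨r, hr1, hr2⟩ := ENNReal.lt_iff_exists_nnreal_btwn.1 hρ
  have hrlt1 : (r : ℝ) < 1 := by
    have := hr2
    rw [← ENNReal.coe_one, ENNReal.coe_lt_coe] at this
    exact_mod_cast this
  refine ⟨r, r.coe_nonneg, hrlt1, ?_⟩
  have htd := spectrum.pow_nnnorm_pow_one_div_tendsto_nhds_spectralRadius M
  have hev : ∀ᶠ k : ℕ in Filter.atTop, (‖M ^ k‖₊ : ENNReal) ^ (1 / (k:ℝ)) < (r : ENNReal) :=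
    htd.eventually_lt_const hr1
  rw [Filter.eventually_atTop] at hev
  obtain ⟨N, hN⟩ := hev
  refine ⟨max N 1, fun k hk => ?_⟩
  have hk1 : 1 ≤ k := le_trans (le_max_right N 1) hk
  have hkN : N ≤ k := le_trans (le_max_left N 1) hk
  have hb := hN k hkN
  have hkpos : (0:ℝ) < k := by exact_mod_cast hk1
  have h2 : ((‖M ^ k‖₊ : ENNReal) ^ (1 / (k:ℝ))) ^ (k:ℝ) < (r : ENNReal) ^ (k:ℝ) := by
    exact ENNReal.rpow_lt_rpow hb hkpos
  rw [← ENNReal.rpow_mul, one_div, inv_mul_cancel₀ (ne_of_gt hkpos), ENNReal.rpow_one] at h2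
  rw [ENNReal.rpow_natCast, ← ENNReal.coe_pow, ENNReal.coe_lt_coe] at h2
  have := le_of_lt h2
  rw [← NNReal.coe_le_coe] at this
  simpa using this

def trLM (n : ℕ) : Matrix (Fin n) (Fin n) ℝ →ₗ[ℝ] Matrix (Fin n) (Fin n) ℝ where
  toFun M := Mᵀ
  map_add' := Matrix.transpose_add
  map_smul' := Matrix.transpose_smul

@[simp] lemma trLM_apply (n : ℕ) (M : Matrix (Fin n) (Fin n) ℝ) : trLM n M = Mᵀ := rfl

def conjLM {n : ℕ} (C : Matrix (Fin n) (Fin n) ℝ) :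
    Matrix (Fin n) (Fin n) ℝ →ₗ[ℝ] Matrix (Fin n) (Fin n) ℝ where
  toFun M := Cᵀ * M * C
  map_add' := by intros; noncomm_ring
  map_smul' := by intros; simp [Matrix.mul_smul, Matrix.smul_mul]

@[simp] lemma conjLM_apply {n : ℕ} (C M : Matrix (Fin n) (Fin n) ℝ) :
    conjLM C M = Cᵀ * M * C := rfl

def quadLM {n : ℕ} (u : Fin n → ℝ) : Matrix (Fin n) (Fin n) ℝ →ₗ[ℝ] ℝ where
  toFun M := u ⬝ᵥ (M *ᵥ u)
  map_add' := by intros; simp [Matrix.add_mulVec]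
  map_smul' := by intros; simp [Matrix.smul_mulVec]

@[simp] lemma quadLM_apply {n : ℕ} (u : Fin n → ℝ) (M : Matrix (Fin n) (Fin n) ℝ) :
    quadLM u M = u ⬝ᵥ (M *ᵥ u) := rfl

variable {n : ℕ}

lemma toC_pow (M : Matrix (Fin n) (Fin n) ℝ) (k : ℕ) : toC (M ^ k) = toC M ^ k := by
  induction k with
  | zero => simpa using toC_one
  | succ k ih => rw [pow_succ, toC_mul, ih, pow_succ]

lemma toC_mulVec_real (M : Matrix (Fin n) (Fin n) ℝ) (v : Fin n → ℝ) :
    toC M *ᵥ (fun i => (v i : ℂ)) = fun i => (((M *ᵥ v) i : ℝ) : ℂ) := by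
  funext i
  simp only [mulVec, dotProduct, toC, Matrix.map_apply]
  push_cast
  rfl

lemma norm_toC (M : Matrix (Fin n) (Fin n) ℝ) : ‖toC M‖ = ‖M‖ := by
  rw [Matrix.frobenius_norm_def, Matrix.frobenius_norm_def]
  congr 1
  refine Finset.sum_congr rfl fun i _ => Finset.sum_congr rfl fun j _ => ?_
  simp [toC]

lemma dot_self_nonneg (v : Fin n → ℝ) : 0 ≤ v ⬝ᵥ v :=
  Finset.sum_nonneg fun i _ => mul_self_nonneg _

lemma dot_self_pos {v : Fin n → ℝ} (hv : v ≠ 0) : 0 < v ⬝ᵥ v := by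
  rcases Function.ne_iff.1 hv with ⟨i, hi⟩
  have : (0:ℝ) < v i * v i := mul_self_pos.2 hi
  exact Finset.sum_pos' (fun j _ => mul_self_nonneg _) ⟨i, Finset.mem_univ i, this⟩

lemma lmap_tsum {F : Type*} [NormedAddCommGroup F] [NormedSpace ℝ F]
    (g : Matrix (Fin n) (Fin n) ℝ →ₗ[ℝ] F) {f : ℕ → Matrix (Fin n) (Fin n) ℝ}
    (hf : Summable f) : g (∑' k, f k) = ∑' k, g (f k) :=
  (LinearMap.toContinuousLinearMap g).map_tsum hf

lemma lyapunov_exists {n : ℕ} (hn : 0 < n) (B : Matrix (Fin n) (Fin n) ℝ)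
    (hB : ∀ μ : ℂ, (∃ x : Fin n → ℂ, x ≠ 0 ∧ toC B *ᵥ x = μ • x) → μ.re < 0) :
    ∃ J R Q : Matrix (Fin n) (Fin n) ℝ,
      Jᵀ = -J ∧ R.PosSemidef ∧ Q.PosSemidef ∧ (J - R) * Q = B := by
  set D := B - 1 with hDdef
  have hDdet : IsUnit D.det := by
    rw [isUnit_iff_ne_zero]
    intro h0
    obtain ⟨v, hv, hv2⟩ := (Matrix.exists_mulVec_eq_zero_iff).2 h0
    have hBv : B *ᵥ v = v := by
      have h1 : D *ᵥ v = B *ᵥ v - v := by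
        rw [hDdef, Matrix.sub_mulVec, Matrix.one_mulVec]
      rw [h1] at hv2
      exact sub_eq_zero.1 hv2
    have hxc : (fun i => ((v i : ℝ) : ℂ)) ≠ 0 := by
      intro hc
      apply hv
      funext i
      have := congrFun hc i
      simpa using this
    have := hB 1 ⟨fun i => ((v i : ℝ) : ℂ), hxc, by
      rw [toC_mulVec_real, hBv, one_smul]⟩
    norm_num at this
  have hDD : D⁻¹ * D = 1 := Matrix.nonsing_inv_mul D hDdet
  have hDD' : D * D⁻¹ = 1 := Matrix.mul_nonsing_inv D hDdet
  set C := (B + 1) * D⁻¹ with hCdef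
  have htDinv : toC D * toC D⁻¹ = 1 := by rw [← toC_mul, hDD', toC_one]
  have htDinv' : toC D⁻¹ * toC D = 1 := by rw [← toC_mul, hDD, toC_one]
  -- eigenvalue bound for C
  have heig : ∀ μ : ℂ, (∃ x : Fin n → ℂ, x ≠ 0 ∧ toC C *ᵥ x = μ • x) → ‖μ‖ < 1 := by
    rintro μ ⟨x, hx0, hx⟩
    set y := toC D⁻¹ *ᵥ x with hy
    have hxy : toC D *ᵥ y = x := by
      rw [hy, Matrix.mulVec_mulVec, htDinv, Matrix.one_mulVec]
    have hy0 : y ≠ 0 := by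
      intro h0
      apply hx0
      rw [← hxy, h0, Matrix.mulVec_zero]
    have heq : toC B *ᵥ y + y = μ • (toC B *ᵥ y) - μ • y := by
      have h0 : toC (B + 1) *ᵥ y = μ • (toC D *ᵥ y) := by
        rw [hxy, ← hx, hCdef, toC_mul, ← Matrix.mulVec_mulVec, ← hy]
      have h1 : toC (B + 1) = toC B + 1 := by rw [toC_add, toC_one]
      have h2 : toC D = toC B - 1 := by rw [hDdef, toC_sub, toC_one]
      rw [h1, h2, Matrix.add_mulVec, Matrix.one_mulVec, Matrix.sub_mulVec, Matrix.one_mulVec,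
        smul_sub] at h0
      exact h0
    have heq2 : (1 - μ) • (toC B *ᵥ y) = (-1 - μ) • y := by
      have hid : (1 - μ) • (toC B *ᵥ y) - (-1 - μ) • y
          = (toC B *ᵥ y + y) - (μ • (toC B *ᵥ y) - μ • y) := by module
      rw [heq] at hid
      simp only [sub_self] at hid
      exact sub_eq_zero.1 hid
    have hμ1 : μ ≠ 1 := by
      intro h1
      subst h1
      rw [sub_self, zero_smul] at heq2
      have : (-1 - 1 : ℂ) = -2 := by norm_num
      rw [this] at heq2
      have := heq2.symm
      rw [smul_eq_zero] at this
      rcases this with h | h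
      · norm_num at h
      · exact hy0 h
    have h1μ : (1 : ℂ) - μ ≠ 0 := sub_ne_zero.2 (Ne.symm hμ1)
    have hev : toC B *ᵥ y = ((-1 - μ) / (1 - μ)) • y := by
      have := congrArg (fun w => (1 - μ)⁻¹ • w) heq2
      simp only [smul_smul] at this
      rw [inv_mul_cancel₀ h1μ, one_smul] at this
      rw [this, div_eq_inv_mul]
    have hre := hB _ ⟨y, hy0, hev⟩
    -- compute the real part
    rw [Complex.div_re] at hre
    have hns : 0 < Complex.normSq (1 - μ) := by
      rw [Complex.normSq_pos]
      exact h1μ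
    have hsum : ((-1 - μ).re * (1 - μ).re + (-1 - μ).im * (1 - μ).im) /
        Complex.normSq (1 - μ) < 0 := by
      rw [add_div]; exact hre
    have hnum : ((-1 - μ).re * (1 - μ).re + (-1 - μ).im * (1 - μ).im) < 0 := by
      rcases div_neg_iff.1 hsum with ⟨_, hb⟩ | ⟨ha, _⟩
      · linarith
      · exact ha
    have hmu2 : μ.re ^ 2 + μ.im ^ 2 < 1 := by
      simp only [Complex.sub_re, Complex.sub_im, Complex.neg_re, Complex.neg_im,
        Complex.one_re, Complex.one_im] at hnum
      nlinarith [hnum]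
    have habs : ‖μ‖ ^ 2 = μ.re ^ 2 + μ.im ^ 2 := by
      rw [Complex.sq_norm, Complex.normSq_apply]; ring
    nlinarith [norm_nonneg μ, habs, hmu2]
  obtain ⟨r, hr0, hr1, N, hNb⟩ := pow_norm_bound hn (toC C) heig
  -- the Lyapunov candidate
  set f : ℕ → Matrix (Fin n) (Fin n) ℝ := fun k => (C ^ k)ᵀ * (C ^ k) with hfdef
  have hnormCk : ∀ k : ℕ, ‖C ^ k‖ = ‖toC C ^ k‖ := fun k => by rw [← toC_pow, norm_toC]
  have hg : Summable (fun k : ℕ => (r ^ 2 : ℝ) ^ k) :=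
    summable_geometric_of_lt_one (by positivity) (by nlinarith)
  have hSumm : Summable f := by
    apply Summable.of_norm_bounded_eventually_nat hg
    rw [Filter.eventually_atTop]
    refine ⟨N, fun k hk => ?_⟩
    calc ‖f k‖ ≤ ‖(C ^ k)ᵀ‖ * ‖C ^ k‖ := norm_mul_le _ _
      _ = ‖C ^ k‖ * ‖C ^ k‖ := by rw [Matrix.frobenius_norm_transpose]
      _ ≤ r ^ k * r ^ k := by
          have h1 := hNb k hk
          rw [← hnormCk] at h1
          exact mul_le_mul h1 h1 (norm_nonneg _) (by positivity)
      _ = (r ^ 2) ^ k := by ring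
  set P := ∑' k, f k with hPdef
  have hfsymm : ∀ k, (f k)ᵀ = f k := fun k => by
    simp [hfdef, Matrix.transpose_mul]
  have hPsymm : Pᵀ = P := by
    have h1 := lmap_tsum (trLM n) hSumm
    simp only [trLM_apply] at h1
    rw [hPdef, h1]
    exact tsum_congr hfsymm
  have hshift : ∀ k, Cᵀ * f k * C = f (k + 1) := by
    intro k
    simp only [hfdef, pow_succ, Matrix.transpose_mul]
    noncomm_ring
  have hlyap : Cᵀ * P * C = P - 1 := by
    have h1 := lmap_tsum (conjLM C) hSumm
    simp only [conjLM_apply] at h1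
    have h2 : (∑' k, Cᵀ * f k * C) = ∑' k, f (k + 1) := tsum_congr hshift
    have h3 : P = f 0 + ∑' k, f (k + 1) := Summable.tsum_eq_zero_add hSumm
    have h4 : f 0 = 1 := by simp [hfdef]
    rw [← hPdef] at h1
    rw [h4] at h3
    rw [h1]; refine h2.trans ?_
    exact eq_sub_of_add_eq' h3.symm
  -- quadratic form bound
  have hterm : ∀ (u : Fin n → ℝ) k, quadLM u (f k) = (C ^ k *ᵥ u) ⬝ᵥ (C ^ k *ᵥ u) := by
    intro u k
    simp only [quadLM_apply, hfdef]
    rw [← Matrix.mulVec_mulVec, Matrix.dotProduct_mulVec, Matrix.vecMul_transpose]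
  have hquad : ∀ u : Fin n → ℝ, u ⬝ᵥ u ≤ u ⬝ᵥ (P *ᵥ u) := by
    intro u
    have h1 := lmap_tsum (quadLM u) hSumm
    rw [← hPdef] at h1
    have hsu : Summable (fun k => quadLM u (f k)) :=
      hSumm.map (LinearMap.toContinuousLinearMap (quadLM u)).toLinearMap.toAddMonoidHom
        (LinearMap.toContinuousLinearMap (quadLM u)).continuous
    have h3 : (∑' k, quadLM u (f k)) = quadLM u (f 0) + ∑' k, quadLM u (f (k + 1)) :=
      Summable.tsum_eq_zero_add hsu
    have h4 : quadLM u (f 0) = u ⬝ᵥ u := by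
      have : f 0 = 1 := by simp [hfdef]
      rw [this]
      simp [quadLM_apply]
    have h5 : 0 ≤ ∑' k, quadLM u (f (k + 1)) := by
      apply tsum_nonneg
      intro k
      rw [hterm]
      exact dot_self_nonneg _
    have h6 : quadLM u P = u ⬝ᵥ (P *ᵥ u) := by simp [quadLM_apply]
    rw [← h6, h1, h3, h4]
    linarith
  have hPpd : P.PosDef := by
    apply Matrix.PosDef.of_dotProduct_mulVec_pos
    · rw [Matrix.IsHermitian, Matrix.conjTranspose_eq_transpose_of_trivial]
      exact hPsymm
    · intro u hu
      rw [star_trivial]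
      exact lt_of_lt_of_le (dot_self_pos hu) (hquad u)
  have hPdet : IsUnit P.det := by
    rw [isUnit_iff_ne_zero]
    exact ne_of_gt hPpd.det_pos
  have hPP : P⁻¹ * P = 1 := Matrix.nonsing_inv_mul P hPdet
  have hPP' : P * P⁻¹ = 1 := Matrix.mul_nonsing_inv P hPdet
  have hPit : P⁻¹ᵀ = P⁻¹ := by rw [Matrix.transpose_nonsing_inv, hPsymm]
  -- the Lyapunov equation for B
  have hE : (B + 1)ᵀ * P * (B + 1) = Dᵀ * (P - 1) * D := by
    have h4 : Dᵀ * (D⁻¹)ᵀ = 1 := by rw [← Matrix.transpose_mul, hDD, Matrix.transpose_one]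
    have key : Dᵀ * (Cᵀ * P * C) * D = (B + 1)ᵀ * P * (B + 1) := by
      rw [hCdef, Matrix.transpose_mul]
      calc Dᵀ * ((D⁻¹)ᵀ * (B + 1)ᵀ * P * ((B + 1) * D⁻¹)) * D
          = (Dᵀ * (D⁻¹)ᵀ) * ((B + 1)ᵀ * P * (B + 1)) * (D⁻¹ * D) := by noncomm_ring
        _ = (B + 1)ᵀ * P * (B + 1) := by rw [h4, hDD, Matrix.one_mul, Matrix.mul_one]
    rw [← key, hlyap]
  have hdbl : (Bᵀ * P + P * B) + (Bᵀ * P + P * B) = -(Dᵀ * D) := by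
    have expand : (B + 1)ᵀ * P * (B + 1) - Dᵀ * (P - 1) * D
        = ((Bᵀ * P + P * B) + (Bᵀ * P + P * B)) + Dᵀ * D := by
      rw [hDdef]
      simp only [Matrix.transpose_add, Matrix.transpose_sub, Matrix.transpose_one]
      noncomm_ring
    have h0 : (B + 1)ᵀ * P * (B + 1) - Dᵀ * (P - 1) * D = 0 := sub_eq_zero.2 hE
    rw [expand] at h0
    exact eq_neg_of_add_eq_zero_left h0
  -- construct J, R, Q
  set NN := D * P⁻¹ with hNNdef
  have hNNt : NNᵀ * NN = P⁻¹ * (Dᵀ * D) * P⁻¹ := by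
    rw [hNNdef, Matrix.transpose_mul, hPit]
    noncomm_ring
  have hkey2 : (B * P⁻¹ + P⁻¹ * Bᵀ) + (B * P⁻¹ + P⁻¹ * Bᵀ) = -(NNᵀ * NN) := by
    have h1 := congrArg (fun M => P⁻¹ * M * P⁻¹) hdbl
    have e1 : P⁻¹ * ((Bᵀ * P + P * B) + (Bᵀ * P + P * B)) * P⁻¹
        = (P⁻¹ * Bᵀ + B * P⁻¹) + (P⁻¹ * Bᵀ + B * P⁻¹) := by
      have a1 : P⁻¹ * (Bᵀ * P) * P⁻¹ = P⁻¹ * Bᵀ := by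
        calc P⁻¹ * (Bᵀ * P) * P⁻¹ = P⁻¹ * Bᵀ * (P * P⁻¹) := by noncomm_ring
          _ = P⁻¹ * Bᵀ := by rw [hPP', Matrix.mul_one]
      have a2 : P⁻¹ * (P * B) * P⁻¹ = B * P⁻¹ := by
        calc P⁻¹ * (P * B) * P⁻¹ = (P⁻¹ * P) * (B * P⁻¹) := by noncomm_ring
          _ = B * P⁻¹ := by rw [hPP, Matrix.one_mul]
      calc P⁻¹ * ((Bᵀ * P + P * B) + (Bᵀ * P + P * B)) * P⁻¹
          = (P⁻¹ * (Bᵀ * P) * P⁻¹ + P⁻¹ * (P * B) * P⁻¹)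
            + (P⁻¹ * (Bᵀ * P) * P⁻¹ + P⁻¹ * (P * B) * P⁻¹) := by noncomm_ring
        _ = (P⁻¹ * Bᵀ + B * P⁻¹) + (P⁻¹ * Bᵀ + B * P⁻¹) := by rw [a1, a2]
    rw [e1] at h1
    rw [hNNt]
    have e2 : P⁻¹ * -(Dᵀ * D) * P⁻¹ = -(P⁻¹ * (Dᵀ * D) * P⁻¹) := by noncomm_ring
    rw [e2] at h1
    calc (B * P⁻¹ + P⁻¹ * Bᵀ) + (B * P⁻¹ + P⁻¹ * Bᵀ)
        = (P⁻¹ * Bᵀ + B * P⁻¹) + (P⁻¹ * Bᵀ + B * P⁻¹) := by abel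
      _ = -(P⁻¹ * (Dᵀ * D) * P⁻¹) := h1
  have hx : B * P⁻¹ + P⁻¹ * Bᵀ = (-(2⁻¹ : ℝ)) • (NNᵀ * NN) := by
    have h2 : (2 : ℝ) • (B * P⁻¹ + P⁻¹ * Bᵀ) = -(NNᵀ * NN) := by
      rw [two_smul]; exact hkey2
    calc B * P⁻¹ + P⁻¹ * Bᵀ = (2⁻¹ : ℝ) • ((2 : ℝ) • (B * P⁻¹ + P⁻¹ * Bᵀ)) := by
          rw [smul_smul]; norm_num
      _ = (-(2⁻¹ : ℝ)) • (NNᵀ * NN) := by rw [h2]; simp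
  refine ⟨B * P⁻¹ + (4⁻¹ : ℝ) • (NNᵀ * NN), (4⁻¹ : ℝ) • (NNᵀ * NN), P, ?_, ?_, hPpd.posSemidef, ?_⟩
  · -- skew-symmetry
    rw [Matrix.transpose_add, Matrix.transpose_mul, hPit, Matrix.transpose_smul,
      Matrix.transpose_mul, Matrix.transpose_transpose]
    linear_combination (norm := module) hx
  · -- R is PSD
    apply Matrix.PosSemidef.of_dotProduct_mulVec_nonneg
    · rw [Matrix.IsHermitian, Matrix.conjTranspose_eq_transpose_of_trivial,
        Matrix.transpose_smul, Matrix.transpose_mul, Matrix.transpose_transpose]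
    · intro x
      rw [star_trivial]
      rw [Matrix.smul_mulVec, dotProduct_smul, ← Matrix.mulVec_mulVec,
        Matrix.dotProduct_mulVec, Matrix.vecMul_transpose]
      have := dot_self_nonneg (NN *ᵥ x)
      positivity
  · -- (J - R) * Q = B
    rw [add_sub_cancel_right, Matrix.mul_assoc, hPP, Matrix.mul_one]

/-- The squared Frobenius norm of a real matrix. -/
def frobSq {n : ℕ} (A : Matrix (Fin n) (Fin n) ℝ) : ℝ := ∑ i, ∑ j, (A i j) ^ 2

lemma frobSq_nonneg {n : ℕ} (A : Matrix (Fin n) (Fin n) ℝ) : 0 ≤ frobSq A :=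
  Finset.sum_nonneg fun i _ => Finset.sum_nonneg fun j _ => sq_nonneg _

lemma frob_pert {n : ℕ} (Y Z : Matrix (Fin n) (Fin n) ℝ) (δ : ℝ) (hδ : 0 < δ) :
    ∃ ε : ℝ, 0 < ε ∧ frobSq (Y + ε • Z) < frobSq Y + δ := by
  set g : ℝ → ℝ := fun ε => ∑ i, ∑ j, (Y i j + ε * Z i j) ^ 2 with hgdef
  have hfg : ∀ ε : ℝ, frobSq (Y + ε • Z) = g ε := by
    intro ε
    simp [frobSq, hgdef, Matrix.add_apply, Matrix.smul_apply, smul_eq_mul]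
  have hg0 : g 0 = frobSq Y := by
    simp [hgdef, frobSq]
  have hgc : Continuous g := by
    apply continuous_finset_sum
    intro i _
    apply continuous_finset_sum
    intro j _
    exact ((continuous_const.add (continuous_id.mul continuous_const)).pow 2)
  have hca := hgc.continuousAt (x := 0)
  rw [Metric.continuousAt_iff] at hca
  obtain ⟨ρ, hρ, hball⟩ := hca δ hδ
  refine ⟨ρ / 2, by linarith, ?_⟩
  have hd : dist (ρ / 2) (0:ℝ) < ρ := by
    rw [Real.dist_eq]
    rw [sub_zero, abs_of_pos (by linarith)]
    linarith
  have := hball hd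
  rw [Real.dist_eq, hg0] at this
  have h2 := (abs_lt.1 this).2
  rw [hfg]
  linarith

lemma pd_add_eps {n : ℕ} {Q : Matrix (Fin n) (Fin n) ℝ} (hQ : Q.PosSemidef) {ε : ℝ}
    (hε : 0 < ε) : (Q + ε • 1).PosDef := by
  apply Matrix.PosDef.of_dotProduct_mulVec_pos
  · exact hQ.1.add (by
      rw [Matrix.IsHermitian, Matrix.conjTranspose_smul, Matrix.conjTranspose_one]
      simp)
  · intro x hx
    rw [star_trivial, Matrix.add_mulVec, dotProduct_add, Matrix.smul_mulVec,
      Matrix.one_mulVec, dotProduct_smul]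
    have h1 := hQ.dotProduct_mulVec_nonneg x
    rw [star_trivial] at h1
    have h2 : 0 < x ⬝ᵥ x := dot_self_pos hx
    have : 0 < ε * (x ⬝ᵥ x) := mul_pos hε h2
    rw [smul_eq_mul]
    linarith

lemma stable_zero {n : ℕ} : IsStable (0 : Matrix (Fin n) (Fin n) ℝ) := by
  have h := stable_of_DH_pd (0 : Matrix (Fin n) (Fin n) ℝ) 0 1 (by simp) .zero .one
  simpa using h

theorem dist_stable_eq_dist_DH {n : ℕ} (A : Matrix (Fin n) (Fin n) ℝ) :
    sInf {v : ℝ | ∃ X : Matrix (Fin n) (Fin n) ℝ, IsStable X ∧ v = frobSq (A - X)} =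
      sInf {v : ℝ | ∃ J R Q : Matrix (Fin n) (Fin n) ℝ,
        Jᵀ = -J ∧ R.PosSemidef ∧ Q.PosSemidef ∧ v = frobSq (A - (J - R) * Q)} := by
  set S := {v : ℝ | ∃ X : Matrix (Fin n) (Fin n) ℝ, IsStable X ∧ v = frobSq (A - X)} with hS
  set Ds := {v : ℝ | ∃ J R Q : Matrix (Fin n) (Fin n) ℝ,
    Jᵀ = -J ∧ R.PosSemidef ∧ Q.PosSemidef ∧ v = frobSq (A - (J - R) * Q)} with hD
  have hSne : S.Nonempty := ⟨frobSq (A - 0), 0, stable_zero, rfl⟩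
  have hDne : Ds.Nonempty := ⟨frobSq (A - ((0:Matrix (Fin n) (Fin n) ℝ) - 0) * 0), 0, 0, 0,
    by simp, .zero, .zero, rfl⟩
  have hSbd : BddBelow S := ⟨0, by rintro v ⟨X, _, rfl⟩; exact frobSq_nonneg _⟩
  have hDbd : BddBelow Ds := ⟨0, by rintro v ⟨J, R, Q, _, _, _, rfl⟩; exact frobSq_nonneg _⟩
  apply le_antisymm
  · apply le_csInf hDne
    rintro d ⟨J, R, Q, hJ, hR, hQ, rfl⟩
    apply le_of_forall_pos_le_add
    intro δ hδ
    obtain ⟨ε, hε, hlt⟩ := frob_pert (A - (J - R) * Q) (-(J - R)) δ hδ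
    have hQε : (Q + ε • 1).PosDef := pd_add_eps hQ hε
    have hXst : IsStable ((J - R) * (Q + ε • 1)) := stable_of_DH_pd _ _ _ hJ hR hQε
    have hmem : frobSq (A - (J - R) * (Q + ε • 1)) ∈ S := ⟨_, hXst, rfl⟩
    have heq : A - (J - R) * (Q + ε • 1) = (A - (J - R) * Q) + ε • (-(J - R)) := by
      rw [Matrix.mul_add]
      have : (J - R) * (ε • (1 : Matrix (Fin n) (Fin n) ℝ)) = ε • (J - R) := by
        rw [Matrix.mul_smul, Matrix.mul_one]
      rw [this]
      module
    refine le_of_lt ?_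
    calc sInf S ≤ frobSq (A - (J - R) * (Q + ε • 1)) := csInf_le hSbd hmem
      _ = frobSq ((A - (J - R) * Q) + ε • (-(J - R))) := by rw [heq]
      _ < frobSq (A - (J - R) * Q) + δ := hlt
  · apply le_csInf hSne
    rintro s ⟨X, hX, rfl⟩
    rcases Nat.eq_zero_or_pos n with hn | hn
    · subst hn
      have hmem : frobSq (A - ((0:Matrix (Fin 0) (Fin 0) ℝ) - 0) * 0) ∈ Ds :=
        ⟨0, 0, 0, by simp, .zero, .zero, rfl⟩
      have h0 : ∀ M : Matrix (Fin 0) (Fin 0) ℝ, frobSq M = 0 := by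
        intro M; simp [frobSq]
      calc sInf Ds ≤ frobSq (A - ((0:Matrix (Fin 0) (Fin 0) ℝ) - 0) * 0) := csInf_le hDbd hmem
        _ = frobSq (A - X) := by rw [h0, h0]
    · apply le_of_forall_pos_le_add
      intro δ hδ
      obtain ⟨ε, hε, hlt⟩ := frob_pert (A - X) 1 δ hδ
      have hstrict : ∀ μ : ℂ, (∃ x : Fin n → ℂ, x ≠ 0 ∧ toC (X - ε • 1) *ᵥ x = μ • x) →
          μ.re < 0 := by
        rintro μ ⟨x, hx0, hx⟩
        have ht : toC (X - ε • 1) = toC X - (ε : ℂ) • 1 := by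
          rw [toC_sub, toC_smul, toC_one]
        rw [ht, Matrix.sub_mulVec, Matrix.smul_mulVec, Matrix.one_mulVec,
          sub_eq_iff_eq_add] at hx
        have hx2 : toC X *ᵥ x = (μ + ε) • x := by
          rw [hx, add_smul]
        have h1 := (hX (μ + ε) ⟨x, hx0, hx2⟩).1
        rw [Complex.add_re, Complex.ofReal_re] at h1
        linarith
      obtain ⟨J, R, Q, hJ, hR, hQ, hfac⟩ := lyapunov_exists hn (X - ε • 1) hstrict
      have hmem : frobSq (A - (J - R) * Q) ∈ Ds := ⟨J, R, Q, hJ, hR, hQ, rfl⟩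
      have heq : A - (J - R) * Q = (A - X) + ε • (1 : Matrix (Fin n) (Fin n) ℝ) := by
        rw [hfac]
        module
      refine le_of_lt ?_
      calc sInf Ds ≤ frobSq (A - (J - R) * Q) := csInf_le hDbd hmem
        _ = frobSq ((A - X) + ε • 1) := by rw [heq]
        _ < frobSq (A - X) + δ := hlt
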